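/- Suppose κ = μ⁺, λ ≥ κ, I is a nonregular κ-complete normal ideal on Z ⊆ 𝒫_κ(λ), and ℙ is a cf(μ)-c.c. forcing notion. Then in any generic extension by ℙ, the ideal generated by I is not (2,λ)-regular, provided that (cf(μ),λ)-regularity of I implies (2,λ)-regularity of I in the ground model. -/

import Mathlib

open Cardinal Set

/-- `I` is a (nonprincipal, proper) ideal on the set `Z` of points of type `P`. -/
structure IdealOn {P : Type*} (Z : Set P) (I : Set (Set P)) : Prop where
  mono : ∀ {A B : Set P}, A ⊆ B → B ∈ I → A ∈ I
  union : ∀ {A B : Set P}, A ∈ I → B ∈ I → A ∪ B ∈ I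
  subset_Z : ∀ A ∈ I, A ⊆ Z
  nonprincipal : ∀ z ∈ Z, {z} ∈ I
  proper : Z ∉ I

/-- `A` is an `I`-positive subset of `Z`. -/
def Pos {P : Type*} (Z : Set P) (I : Set (Set P)) (A : Set P) : Prop := A ⊆ Z ∧ A ∉ I

/-- The restricted ideal `I ↾ A = {B : B ∩ A ∈ I}`. -/
def restrict {P : Type*} (I : Set (Set P)) (A : Set P) : Set (Set P) := {B | B ∩ A ∈ I}

/-- The restricted ideal `I ↾ A`, as an ideal on `Z` (members required to be `⊆ Z`). -/
def restrictOn {P : Type*} (Z : Set P) (I : Set (Set P)) (A : Set P) : Set (Set P) :=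
  {B | B ⊆ Z ∧ B ∩ A ∈ I}

/-- `I` is `κ`-complete: closed under unions of length `< κ`. -/
def Complete {P : Type*} (I : Set (Set P)) (κ : Cardinal.{0}) : Prop :=
  ∀ (o : Ordinal.{0}) (f : Ordinal.{0} → Set P), o < κ.ord → (∀ i < o, f i ∈ I) →
    (⋃ i ∈ Set.Iio o, f i) ∈ I

/-- `I` is `δ`-saturated: there is no `δ`-sequence of `I`-positive sets that are
pairwise almost disjoint modulo `I`. -/
def Saturated {P : Type*} (Z : Set P) (I : Set (Set P)) (δ : Cardinal.{0}) : Prop :=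
  ¬ ∃ f : Ordinal.{0} → Set P, (∀ i < δ.ord, Pos Z I (f i)) ∧
      ∀ i j, i < δ.ord → j < δ.ord → i ≠ j → f i ∩ f j ∈ I

/-- The set `x` of ordinals has order type `a`. -/
def HasOtype (x : Set Ordinal.{0}) (a : Ordinal.{0}) : Prop :=
  Nonempty ((Subrel ((· < ·) : Ordinal → Ordinal → Prop) x) ≃r
    (Subrel ((· < ·) : Ordinal → Ordinal → Prop) (Set.Iio a)))

/-- The set `x` of ordinals has order type at least `a`. -/
def OtypeGE (x : Set Ordinal.{0}) (a : Ordinal.{0}) : Prop :=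
  Nonempty ((Subrel ((· < ·) : Ordinal → Ordinal → Prop) (Set.Iio a)) ↪r
    (Subrel ((· < ·) : Ordinal → Ordinal → Prop) x))

/-- `I` is `(a,b)`-regular: every `b`-sequence of positive sets has a positive refinement
with empty intersections along index sets of order type `a`. -/
def Regular2 {P : Type*} (Z : Set P) (I : Set (Set P)) (a b : Ordinal.{0}) : Prop :=
  ∀ A : Ordinal.{0} → Set P, (∀ i < b, Pos Z I (A i)) →
    ∃ B : Ordinal.{0} → Set P,
      (∀ i < b, B i ⊆ A i ∧ Pos Z I (B i)) ∧
      ∀ x : Set Ordinal.{0}, x ⊆ Set.Iio b → HasOtype x a → ⋂ i ∈ x, B i = ∅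

/-- `I` is `(a,b,c)`-regular: every `c`-sequence of positive sets has a positive refinement
whose intersections along index sets of order type `b` have cardinality at most `a`. -/
def Regular3 {P : Type u} (Z : Set P) (I : Set (Set P)) (a : Cardinal.{u}) (b c : Ordinal.{0}) :
    Prop :=
  ∀ A : Ordinal.{0} → Set P, (∀ i < c, Pos Z I (A i)) →
    ∃ B : Ordinal.{0} → Set P,
      (∀ i < c, B i ⊆ A i ∧ Pos Z I (B i)) ∧
      ∀ x : Set Ordinal.{0}, x ⊆ Set.Iio c → HasOtype x b → #↥(⋂ i ∈ x, B i) ≤ a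

/-- Normality of an ideal on `Z ⊆ 𝒫(lam)` (points are sets of ordinals `< lam`):
each `x̂ = {z : x ∈ z}` is measure one, and every regressive function on a positive
set is constant on a positive set. -/
structure NormalP (lam : Ordinal.{0}) (Z : Set (Set Ordinal.{0}))
    (I : Set (Set (Set Ordinal.{0}))) : Prop where
  hat : ∀ x < lam, {z ∈ Z | x ∉ z} ∈ I
  regress : ∀ (A : Set (Set Ordinal.{0})) (f : Set Ordinal.{0} → Ordinal.{0}),
    Pos Z I A → (∀ z ∈ A, f z ∈ z) →
    ∃ x, ∃ B ⊆ A, Pos Z I B ∧ ∀ z ∈ B, f z = x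

/-- Normality of an ideal on `Z ⊆ 𝒫(X)` for an abstract set `X`. -/
structure NormalOn {X : Type*} (Z : Set (Set X)) (I : Set (Set (Set X))) : Prop where
  hat : ∀ x : X, {z ∈ Z | x ∉ z} ∈ I
  regress : ∀ (A : Set (Set X)) (f : Set X → X),
    Pos Z I A → (∀ z ∈ A, f z ∈ z) →
    ∃ x, ∃ B ⊆ A, Pos Z I B ∧ ∀ z ∈ B, f z = x

/-- `𝒫_κ(lam)`, as the collection of sets of ordinals below `lam` of size `< κ`. -/
def Pkl (κ : Cardinal.{0}) (lam : Ordinal.{0}) : Set (Set Ordinal.{0}) :=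
  {z | z ⊆ Set.Iio lam ∧ #↥z < Cardinal.lift.{1} κ}
/-- Suppose `κ = μ⁺ ≤ λ`, `I` is a nonregular `κ`-complete normal ideal on
`Z ⊆ 𝒫_κ(λ)`, `(cf(μ),λ)`-regularity of `I` implies `(2,λ)`-regularity of `I`, and `P` is a
`cf(μ)`-c.c. forcing notion.  Then in any generic extension by `P`, the ideal generated by `I`
is not `(2,λ)`-regular.  This is formalized via `P`-names: for each condition `p` there is a
ground-model sequence of `I`-positive sets admitting no name (below `p`) for a pairwise
disjoint refinement into sets forced to be positive for the generated ideal.  Here a name for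
a refinement is a function `B` assigning to each index `α < λ` and each point `z` the set
`B α z` of conditions forcing `z` into the `α`-th refining set. -/
theorem stmt11 (κ μ lam : Cardinal.{0}) (hμ : ℵ₀ ≤ μ) (hκ : κ = Order.succ μ)
    (hκlam : κ ≤ lam)
    (Z : Set (Set Ordinal.{0})) (hZ : Z ⊆ Pkl κ lam.ord)
    (I : Set (Set (Set Ordinal.{0})))
    (hI : IdealOn Z I) (hcomp : Complete I κ) (hnorm : NormalP lam.ord Z I)
    (hnonreg : ¬ Regular2 Z I 2 lam.ord)
    (himp : Regular2 Z I ((μ.ord.cof).ord) lam.ord → Regular2 Z I 2 lam.ord)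
    (P : Type) [Preorder P]
    (hcc : ∀ S : Set P, (∀ p ∈ S, ∀ q ∈ S, p ≠ q → ¬∃ r, r ≤ p ∧ r ≤ q) →
      #S < μ.ord.cof) :
    ∀ p : P, ∃ A : Ordinal → Set (Set Ordinal.{0}),
      (∀ α < lam.ord, Pos Z I (A α)) ∧
      ¬ ∃ B : Ordinal → Set Ordinal.{0} → Set P,
        -- all conditions mentioned lie below `p`
        (∀ α < lam.ord, ∀ z q, q ∈ B α z → q ≤ p) ∧
        -- the name for the `α`-th set names a subset of `A α`
        (∀ α < lam.ord, ∀ z, z ∉ A α → B α z = ∅) ∧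
        -- the refinement is forced to be pairwise disjoint
        (∀ α β, α < lam.ord → β < lam.ord → α ≠ β →
          ∀ z q r, q ∈ B α z → r ∈ B β z → ¬∃ s, s ≤ q ∧ s ≤ r) ∧
        -- each named set is forced (below `p`) to be positive for the generated ideal:
        -- no `q ≤ p` forces it to be covered by a ground-model member of `I`
        (∀ α < lam.ord, ∀ q ≤ p, ∀ S ∈ I, ∃ z r, z ∉ S ∧ r ≤ q ∧ r ∈ B α z) := by
  intro p
  have hnreg : ¬ Regular2 Z I ((μ.ord.cof).ord) lam.ord := fun h => hnonreg (himp h)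
  rw [Regular2] at hnreg
  push_neg at hnreg
  obtain ⟨A, hA, hfail⟩ := hnreg
  refine ⟨A, hA, ?_⟩
  rintro ⟨B, hB1, hB2, hB3, hB4⟩
  classical
  set C : Ordinal.{0} → Set (Set Ordinal.{0}) :=
    fun α => {z | z ∈ A α ∧ (B α z).Nonempty} with hC
  have hCsub : ∀ α, C α ⊆ A α := fun α z hz => hz.1
  have hCpos : ∀ α < lam.ord, Pos Z I (C α) := by
    intro α hα
    refine ⟨(hCsub α).trans (hA α hα).1, ?_⟩
    intro hmem
    obtain ⟨z, r, hz, hr, hrB⟩ := hB4 α hα p le_rfl (C α) hmem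
    have hzA : z ∈ A α := by
      by_contra h
      rw [hB2 α hα z h] at hrB
      exact hrB
    exact hz ⟨hzA, ⟨r, hrB⟩⟩
  have hempty : ∀ x : Set Ordinal.{0}, x ⊆ Set.Iio lam.ord →
      HasOtype x ((μ.ord.cof).ord) → ⋂ i ∈ x, C i = ∅ := by
    intro x hx hot
    rw [Set.eq_empty_iff_forall_notMem]
    intro z hz
    simp only [Set.mem_iInter] at hz
    -- choose, for each α ∈ x, a condition in B α z
    have hchoice : ∀ α ∈ x, (B α z).Nonempty := fun α hα => (hz α hα).2
    have hP : Nonempty P := ⟨p⟩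
    choose! q hq using hchoice
    set S : Set P := q '' x with hS
    have hanti : ∀ p₁ ∈ S, ∀ p₂ ∈ S, p₁ ≠ p₂ → ¬∃ r, r ≤ p₁ ∧ r ≤ p₂ := by
      rintro p₁ ⟨α, hα, rfl⟩ p₂ ⟨β, hβ, rfl⟩ hne
      have hab : α ≠ β := fun h => hne (by rw [h])
      exact hB3 α β (hx hα) (hx hβ) hab z (q α) (q β) (hq α hα) (hq β hβ)
    have hcard : #↥S < μ.ord.cof := hcc S hanti
    have hinj : Function.Injective (fun a : ↥x => (⟨q a.1, Set.mem_image_of_mem q a.2⟩ : ↥S)) := by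
      rintro ⟨α, hα⟩ ⟨β, hβ⟩ h
      simp only [Subtype.mk.injEq] at h
      by_contra hne
      have hab : α ≠ β := fun hh => hne (by simp [hh])
      have := hB3 α β (hx hα) (hx hβ) hab z (q α) (q β) (hq α hα) (hq β hβ)
      exact this ⟨q α, le_refl _, h ▸ le_refl _⟩
    have hle : Cardinal.lift.{0} #↥x ≤ Cardinal.lift.{1} #↥S :=
      Cardinal.lift_mk_le'.2 ⟨⟨_, hinj⟩⟩
    rw [Cardinal.lift_id'] at hle
    have hxcard : #↥x = Cardinal.lift.{1} (μ.ord.cof) := by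
      obtain ⟨e⟩ := hot
      rw [show #↥x = #↥(Set.Iio μ.ord.cof.ord) from Cardinal.mk_congr e.toEquiv, Ordinal.mk_Iio_ordinal, Cardinal.card_ord]
    rw [hxcard] at hle
    exact absurd (hle.trans_lt (Cardinal.lift_lt.2 hcard)) (lt_irrefl _)
  obtain ⟨x, hx1, hx2, hx3⟩ := hfail C (fun α hα => ⟨hCsub α, hCpos α hα⟩)
  rw [hempty x hx1 hx2] at hx3
  exact Set.not_nonempty_empty hx3
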